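/- Let p be a prime, r ≥ 1, and d ≥ 2 with (p, r, d) such that r · gcd(d, p^r − 1) ≥ (p^{rd} − 1) / (2(p^r − 1)). Then d = 2, r = 1, and p ≤ 3. -/

import Mathlib

lemma aux_two_mul_le_two_pow : ∀ r : ℕ, 2 * r ≤ 2 ^ r := by
  intro r
  induction r with
  | zero => norm_num
  | succ n ih =>
    rcases Nat.lt_or_ge n 1 with h | h
    · interval_cases n <;> norm_num
    · have h2 : 2 ≤ 2 ^ n := Nat.one_lt_two_pow_iff.mpr (by omega)
      rw [pow_succ]; omega

lemma aux_two_mul_lt_two_pow {r : ℕ} (hr : 3 ≤ r) : 2 * r < 2 ^ r := by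
  induction r with
  | zero => omega
  | succ n ih =>
    rcases Nat.lt_or_ge n 3 with h | h
    · interval_cases n <;> simp_all
    · have := ih h
      rw [pow_succ]; omega

lemma aux_four_mul_le_three_pow {r : ℕ} (hr : 2 ≤ r) : 4 * r ≤ 3 ^ r := by
  induction r with
  | zero => omega
  | succ n ih =>
    rcases Nat.lt_or_ge n 2 with h | h
    · interval_cases n <;> simp_all
    · have := ih h
      have h3 : 4 ≤ 3 ^ n := by
        calc 4 ≤ 4 * n := by omega
        _ ≤ 3 ^ n := ih h
      rw [pow_succ]; omega

/-- If `p` is prime, `r ≥ 1`, `d ≥ 2` and `r·gcd(d, p^r − 1) ≥ (p^{rd} − 1)/(2(p^r − 1))`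
(stated multiplied out to avoid division), then `d = 2`, `r = 1` and `p ≤ 3`. -/
theorem stmt8 (p r d : ℕ) (hp : p.Prime) (hr : 1 ≤ r) (hd : 2 ≤ d)
    (h : p ^ (r * d) - 1 ≤ 2 * (p ^ r - 1) * (r * Nat.gcd d (p ^ r - 1))) :
    d = 2 ∧ r = 1 ∧ p ≤ 3 := by
  have hp2 : 2 ≤ p := hp.two_le
  rw [pow_mul] at h
  generalize hq : p ^ r = q at h
  have hq2r : 2 ^ r ≤ q := hq ▸ Nat.pow_le_pow_left hp2 r
  have hq2 : 2 ≤ q := by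
    calc 2 = 2 ^ 1 := rfl
    _ ≤ 2 ^ r := Nat.pow_le_pow_right (by norm_num) hr
    _ ≤ q := hq2r
  set g := Nat.gcd d (q - 1) with hg_def
  have hg1 : 1 ≤ g := Nat.gcd_pos_of_pos_left _ (by omega)
  have hgd : g ∣ d := Nat.gcd_dvd_left _ _
  have hgq : g ∣ q - 1 := Nat.gcd_dvd_right _ _
  have hgq' : g ≤ q - 1 := Nat.le_of_dvd (by omega) hgq
  -- cancel (q-1): q^(d-1) ≤ 2*(r*g)
  have hkey : q ^ (d - 1) ≤ 2 * (r * g) := by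
    have e1 : (q - 1) * q ^ (d - 1) = q ^ d - q ^ (d - 1) := by
      rw [Nat.sub_mul, one_mul]
      congr 1
      rw [← pow_succ']
      congr 1
      omega
    have e2 : 1 ≤ q ^ (d - 1) := Nat.one_le_pow _ _ (by omega)
    have e3 : (q - 1) * q ^ (d - 1) ≤ q ^ d - 1 := by omega
    have e4 : (q - 1) * q ^ (d - 1) ≤ (q - 1) * (2 * (r * g)) := by
      calc (q - 1) * q ^ (d - 1) ≤ q ^ d - 1 := e3
      _ ≤ 2 * (q - 1) * (r * g) := h
      _ = (q - 1) * (2 * (r * g)) := by ring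
    exact Nat.le_of_mul_le_mul_left e4 (by omega)
  -- first: d = 2
  have hd2 : d = 2 := by
    by_contra hne
    have hd3 : 3 ≤ d := by omega
    have hq2d : q * q ≤ q ^ (d - 1) := by
      calc q * q = q ^ 2 := (sq q).symm
      _ ≤ q ^ (d - 1) := Nat.pow_le_pow_right (by omega) (by omega)
    have h1 : q * q ≤ 2 * r * (q - 1) := by
      calc q * q ≤ 2 * (r * g) := le_trans hq2d hkey
      _ ≤ 2 * (r * (q - 1)) := by
          have := Nat.mul_le_mul_left r hgq'
          omega
      _ = 2 * r * (q - 1) := by ring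
    have h2 : q < 2 * r := by
      have h3 : 2 * r * (q - 1) < 2 * r * q :=
        Nat.mul_lt_mul_of_le_of_lt (le_refl (2 * r)) (by omega) (by omega)
      have h4 : q * q < 2 * r * q := by omega
      exact Nat.lt_of_mul_lt_mul_right h4
    rcases Nat.lt_or_ge r 3 with hr3 | hr3
    · interval_cases r
      · omega
      · have : 4 ≤ q := by
          calc 4 = 2 ^ 2 := by norm_num
          _ ≤ q := hq2r
        omega
    · have := aux_two_mul_lt_two_pow hr3
      omega
  subst hd2
  -- exact version for d = 2 : q + 1 ≤ 2 * (r * g)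
  have hex : q + 1 ≤ 2 * (r * g) := by
    obtain ⟨m, hm⟩ : ∃ m, q = m + 1 := ⟨q - 1, by omega⟩
    have e1 : (q - 1) * (q + 1) = q ^ 2 - 1 := by
      subst hm
      have t1 : (m + 1) ^ 2 = m * m + 2 * m + 1 := by ring
      have t2 : (m + 1 - 1) * ((m + 1) + 1) = m * m + 2 * m := by
        simp only [Nat.add_sub_cancel]; ring
      omega
    have e4 : (q - 1) * (q + 1) ≤ (q - 1) * (2 * (r * g)) := by
      calc (q - 1) * (q + 1) = q ^ 2 - 1 := e1
      _ ≤ 2 * (q - 1) * (r * g) := h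
      _ = (q - 1) * (2 * (r * g)) := by ring
    exact Nat.le_of_mul_le_mul_left e4 (by omega)
  have hg2 : g ≤ 2 := Nat.le_of_dvd (by omega) hgd
  -- p must be odd
  have hpodd : p ≠ 2 := by
    intro hp2e
    subst hp2e
    have hqeven : 2 ∣ q := hq ▸ dvd_pow_self 2 (by omega)
    have hgo : g = 1 := by
      rcases (Nat.dvd_prime Nat.prime_two).mp hgd with h1 | h1
      · exact h1
      · exfalso
        have : (2 : ℕ) ∣ q - 1 := h1 ▸ hgq
        omega
    have hx : q + 1 ≤ 2 * r := by
      calc q + 1 ≤ 2 * (r * g) := hex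
      _ = 2 * (r * 1) := by rw [hgo]
      _ = 2 * r := by ring
    have := aux_two_mul_le_two_pow r
    omega
  have hp3 : 3 ≤ p := by omega
  -- r = 1
  have hr1 : r = 1 := by
    by_contra hne
    have hr2 : 2 ≤ r := by omega
    have h3r : 3 ^ r ≤ q := hq ▸ Nat.pow_le_pow_left hp3 r
    have h4r := aux_four_mul_le_three_pow hr2
    have : q + 1 ≤ 4 * r := by
      calc q + 1 ≤ 2 * (r * g) := hex
      _ ≤ 2 * (r * 2) := by
          have := Nat.mul_le_mul_left r hg2
          omega
      _ = 4 * r := by ring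
    omega
  subst hr1
  rw [pow_one] at hq
  refine ⟨rfl, rfl, ?_⟩
  omega
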